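/- Let a, b be real numbers with b > 0 and set η = a + ib. For every pair (z₁, z₂) ∈ (ℂ \ {0})² there exist a unique complex number α with e^{-2πb} < |α| ≤ 1 and a unique complex number w such that z₁ = α e^{iηw} and z₂ = e^{iw}. (Equivalently: the leaves L_α, for α in the annulus 𝔸 = {α : e^{-2πb} < |α| ≤ 1}, are pairwise disjoint and their union is (ℂ*)².) -/

import Mathlib

open Complex

/-- For `η = a + ib` with `b > 0`, every point of `(ℂ*)²` lies on exactly one
leaf `L_α` with `α` in the annulus `e^{-2πb} < |α| ≤ 1`: for each
`(z₁, z₂) ∈ (ℂ*)²` there is a unique pair `(α, w)` with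
`e^{-2πb} < |α| ≤ 1`, `z₁ = α e^{iηw}` and `z₂ = e^{iw}`. -/
theorem stmt_16 (a b : ℝ) (hb : 0 < b) (η : ℂ) (hη : η = (a : ℂ) + (b : ℂ) * Complex.I) :
    ∀ z₁ z₂ : ℂ, z₁ ≠ 0 → z₂ ≠ 0 →
      ∃! p : ℂ × ℂ,
        (Real.exp (-(2 * Real.pi * b)) < ‖p.1‖ ∧ ‖p.1‖ ≤ 1) ∧
        z₁ = p.1 * Complex.exp (Complex.I * η * p.2) ∧
        z₂ = Complex.exp (Complex.I * p.2) := by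
  intro z₁ z₂ hz₁ hz₂
  have hπ : (0:ℝ) < 2 * Real.pi * b := by positivity
  have hre : ∀ x : ℂ, (I * η * x).re = -b * x.re - a * x.im := by
    intro x; subst hη; simp [Complex.mul_re, Complex.mul_im]
  -- existence data
  set L : ℂ := Complex.log z₂ with hL
  set D : ℝ := Real.log (‖z₁‖) - a * L.re + b * L.im with hD
  set k : ℤ := ⌊-D / (2 * Real.pi * b)⌋ with hk
  set w : ℂ := -I * L + 2 * Real.pi * (k : ℂ) with hw
  set α : ℂ := z₁ * Complex.exp (-(I * η * w)) with hα
  have hIw : I * w = L + (k : ℂ) * (2 * Real.pi * I) := by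
    rw [hw]; ring_nf; rw [Complex.I_sq]; ring
  have hz2 : z₂ = Complex.exp (I * w) := by
    rw [hIw, Complex.exp_add, Complex.exp_int_mul_two_pi_mul_I, mul_one,
      Complex.exp_log hz₂]
  have hwre : w.re = L.im + 2 * Real.pi * k := by
    rw [hw]; simp
  have hwim : w.im = -L.re := by
    rw [hw]; simp
  have habs : ‖α‖ = Real.exp (D + 2 * Real.pi * b * k) := by
    rw [hα, norm_mul, Complex.norm_exp]
    have : (-(I * η * w)).re = -(I * η * w).re := by simp
    rw [this, hre, hwre, hwim]
    rw [show ‖z₁‖ = Real.exp (Real.log (‖z₁‖)) from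
      (Real.exp_log (norm_pos_iff.mpr hz₁)).symm, ← Real.exp_add]
    congr 1; rw [hD]; ring
  have hk1 : (k : ℝ) ≤ -D / (2 * Real.pi * b) := Int.floor_le _
  have hk2 : -D / (2 * Real.pi * b) < k + 1 := Int.lt_floor_add_one _
  have hb1 : D + 2 * Real.pi * b * k ≤ 0 := by
    have := (le_div_iff₀ hπ).mp hk1
    nlinarith
  have hb2 : -(2 * Real.pi * b) < D + 2 * Real.pi * b * k := by
    have := (div_lt_iff₀ hπ).mp hk2
    nlinarith
  refine ⟨(α, w), ⟨⟨?_, ?_⟩, ?_, hz2⟩, ?_⟩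
  · rw [habs]; exact Real.exp_lt_exp.mpr hb2
  · rw [habs]
    calc Real.exp (D + 2 * Real.pi * b * k) ≤ Real.exp 0 := Real.exp_le_exp.mpr hb1
      _ = 1 := Real.exp_zero
  · rw [hα, mul_assoc, ← Complex.exp_add, neg_add_cancel, Complex.exp_zero, mul_one]
  -- uniqueness
  rintro ⟨β, v⟩ ⟨⟨hβ1, hβ2⟩, hv1, hv2⟩
  have hαpos : Real.exp (-(2 * Real.pi * b)) < ‖α‖ ∧ ‖α‖ ≤ 1 := by
    constructor
    · rw [habs]; exact Real.exp_lt_exp.mpr hb2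
    · rw [habs]; simpa using Real.exp_le_exp.mpr hb1
  have he : Complex.exp (I * v) = Complex.exp (I * w) := by rw [← hv2, ← hz2]
  obtain ⟨n, hn⟩ := Complex.exp_eq_exp_iff_exists_int.mp he
  have hvw : v = w + 2 * Real.pi * n := by
    have h2 : I * v = I * (w + 2 * Real.pi * n) := by rw [hn]; ring
    exact mul_left_cancel₀ Complex.I_ne_zero h2
  -- abs relation
  have hz1' : β * Complex.exp (I * η * v) = α * Complex.exp (I * η * w) := by
    rw [← hv1, hα, mul_assoc, ← Complex.exp_add, neg_add_cancel, Complex.exp_zero, mul_one]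
  have habs2 : ‖β‖ * Real.exp (-b * w.re - a * w.im - 2 * Real.pi * b * n)
      = ‖α‖ * Real.exp (-b * w.re - a * w.im) := by
    have := congrArg (‖·‖) hz1'
    rw [norm_mul, norm_mul, Complex.norm_exp, Complex.norm_exp, hre, hre] at this
    rw [hvw] at this
    convert this using 3 <;> simp <;> ring
  have hratio : ‖β‖ = ‖α‖ * Real.exp (2 * Real.pi * b * n) := by
    have hsplit : Real.exp (-b * w.re - a * w.im) =
        Real.exp (-b * w.re - a * w.im - 2 * Real.pi * b * n)
          * Real.exp (2 * Real.pi * b * n) := by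
      rw [← Real.exp_add]; congr 1; ring
    have h4 : ‖β‖ * Real.exp (-b * w.re - a * w.im - 2 * Real.pi * b * n)
        = (‖α‖ * Real.exp (2 * Real.pi * b * n))
          * Real.exp (-b * w.re - a * w.im - 2 * Real.pi * b * n) := by
      rw [habs2, hsplit]; ring
    exact mul_right_cancel₀ (Real.exp_pos _).ne' h4
  -- n = 0
  have hn0 : n = 0 := by
    by_contra hne
    rcases lt_or_gt_of_ne hne with h | h
    · -- n ≤ -1 : abs β ≤ abs α * exp(-2πb) ≤ exp(-2πb), contradicting hβ1
      have hle : (n : ℝ) ≤ -1 := by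
        have : n ≤ -1 := by omega
        exact_mod_cast this
      have h1 : Real.exp (2 * Real.pi * b * n) ≤ Real.exp (-(2 * Real.pi * b)) := by
        apply Real.exp_le_exp.mpr; nlinarith
      have hthis := hβ1
      rw [hratio] at hthis
      have h3 : ‖α‖ * Real.exp (2 * Real.pi * b * n)
          ≤ Real.exp (-(2 * Real.pi * b)) :=
        calc ‖α‖ * Real.exp (2 * Real.pi * b * n)
            ≤ 1 * Real.exp (2 * Real.pi * b * n) :=
              mul_le_mul_of_nonneg_right hαpos.2 (Real.exp_pos _).le
          _ = Real.exp (2 * Real.pi * b * n) := one_mul _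
          _ ≤ Real.exp (-(2 * Real.pi * b)) := h1
      linarith
    · have hge : (1 : ℝ) ≤ n := by exact_mod_cast h
      have h1 : Real.exp (2 * Real.pi * b) ≤ Real.exp (2 * Real.pi * b * n) := by
        apply Real.exp_le_exp.mpr; nlinarith
      have hthis := hβ2
      rw [hratio] at hthis
      have h2 : Real.exp (-(2 * Real.pi * b)) * Real.exp (2 * Real.pi * b) = 1 := by
        rw [← Real.exp_add]; simp
      have h3 : Real.exp (-(2 * Real.pi * b)) * Real.exp (2 * Real.pi * b)
          < ‖α‖ * Real.exp (2 * Real.pi * b * n) :=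
        calc Real.exp (-(2 * Real.pi * b)) * Real.exp (2 * Real.pi * b)
            ≤ Real.exp (-(2 * Real.pi * b)) * Real.exp (2 * Real.pi * b * n) :=
              mul_le_mul_of_nonneg_left h1 (Real.exp_pos _).le
          _ < ‖α‖ * Real.exp (2 * Real.pi * b * n) :=
              mul_lt_mul_of_pos_right hαpos.1 (Real.exp_pos _)
      rw [h2] at h3
      linarith
  have hv : v = w := by rw [hvw, hn0]; simp
  have hβα : β = α := by
    have := hz1'
    rw [hv] at this
    exact mul_right_cancel₀ (Complex.exp_ne_zero _) this
  simp [hβα, hv]
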